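/- arXiv:1905.08171 — 2 statements merged into one kernel-verified Lean document; each statement's English description precedes it below -/
import Mathlib

section
/- Let P_l and P_u be Borel probability measures on ℝ^d with finite second moments, and let X^l ~ P_l, X^u ~ P_u, and λ be mutually independent random variables, where λ is distributed according to the Beta distribution β(α, α) on [0,1] for some α > 0. Let P̃ be the law of the interpolated sample x̃ = λ·X^l + (1−λ)·X^u. Define the euclidean generalized energy distance between probability measures P, Q (with independent X, X' ~ P and Y, Y' ~ Q, all mutually independent) by J²(P, Q) = 2·E[‖X − Y‖²] − E[‖X − X'‖²] − E[‖Y − Y'‖²], where ‖·‖ is the euclidean norm. Then J²(P̃, P_u) = (1/4)·J²(P_l, P_u). -/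
open MeasureTheory ProbabilityTheory

/-- The Beta(α, α) probability measure on `[0,1]`, given by its density
`Γ(2α)/(Γ(α)Γ(α)) · x^(α−1) (1−x)^(α−1)` with respect to Lebesgue measure on `[0,1]`. -/
noncomputable def betaMeasure (α : ℝ) : Measure ℝ :=
  (volume.restrict (Set.Icc (0 : ℝ) 1)).withDensity
    (fun x => ENNReal.ofReal
      (Real.Gamma (2 * α) / (Real.Gamma α * Real.Gamma α) * x ^ (α - 1) * (1 - x) ^ (α - 1)))

/-- The euclidean generalized energy distance (with squared euclidean distances) between two
probability measures `P, Q` on `ℝ^d`: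
`J²(P, Q) = 2 E[‖X − Y‖²] − E[‖X − X'‖²] − E[‖Y − Y'‖²]`, where `X, X' ~ P`, `Y, Y' ~ Q`
are mutually independent. -/
noncomputable def energyDistSq {d : ℕ} (P Q : Measure (EuclideanSpace ℝ (Fin d))) : ℝ :=
  2 * (∫ p, ‖p.1 - p.2‖ ^ 2 ∂(P.prod Q))
    - (∫ p, ‖p.1 - p.2‖ ^ 2 ∂(P.prod P))
    - (∫ p, ‖p.1 - p.2‖ ^ 2 ∂(Q.prod Q))

section Beta

lemma oneSub_measurable : Measurable (fun x : ℝ => 1 - x) := measurable_id.const_sub 1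

noncomputable def oneSubEquiv : ℝ ≃ᵐ ℝ where
  toEquiv := ⟨fun x : ℝ => 1 - x, fun x : ℝ => 1 - x, fun x => by simp, fun x => by simp⟩
  measurable_toFun := oneSub_measurable
  measurable_invFun := oneSub_measurable

lemma betaDensity_measurable (α : ℝ) :
    Measurable (fun x : ℝ => ENNReal.ofReal
      (Real.Gamma (2 * α) / (Real.Gamma α * Real.Gamma α) * x ^ (α - 1) * (1 - x) ^ (α - 1))) := by
  apply Measurable.ennreal_ofReal
  exact ((measurable_const.mul (measurable_id.pow_const _)).mul
    ((measurable_id.const_sub 1).pow_const _))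

lemma betaMeasure_compl_Icc (α : ℝ) : _root_.betaMeasure α (Set.Icc (0:ℝ) 1)ᶜ = 0 := by
  rw [_root_.betaMeasure, withDensity_apply _ (measurableSet_Icc.compl),
    Measure.restrict_restrict (measurableSet_Icc.compl)]
  simp

lemma map_oneSub_restrict :
    Measure.map (fun x : ℝ => 1 - x) (volume.restrict (Set.Icc (0:ℝ) 1))
      = volume.restrict (Set.Icc (0:ℝ) 1) := by
  have h1 : (fun x : ℝ => 1 - x) ⁻¹' (Set.Icc (0:ℝ) 1) = Set.Icc (0:ℝ) 1 := by
    ext x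
    simp only [Set.mem_preimage, Set.mem_Icc]
    constructor <;> intro h <;> constructor <;> linarith [h.1, h.2]
  have h2 : Measure.map (fun x : ℝ => 1 - x) volume = volume :=
    Measure.map_sub_left_eq_self volume 1
  have key : Measure.map (fun x : ℝ => 1 - x)
        (volume.restrict ((fun x : ℝ => 1 - x) ⁻¹' Set.Icc (0:ℝ) 1))
      = (Measure.map (fun x : ℝ => 1 - x) volume).restrict (Set.Icc (0:ℝ) 1) :=
    (oneSubEquiv.restrict_map volume (Set.Icc (0:ℝ) 1)).symm
  rw [h1, h2] at key
  exact key

lemma map_oneSub_betaMeasure (α : ℝ) :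
    Measure.map (fun x : ℝ => 1 - x) (_root_.betaMeasure α) = _root_.betaMeasure α := by
  set f := fun x : ℝ => ENNReal.ofReal
      (Real.Gamma (2 * α) / (Real.Gamma α * Real.Gamma α) * x ^ (α - 1) * (1 - x) ^ (α - 1)) with hf
  have hfm : Measurable f := betaDensity_measurable α
  have hsym : ∀ x : ℝ, f (1 - x) = f x := by
    intro x; simp only [hf, sub_sub_cancel]; ring_nf
  ext s hs
  rw [Measure.map_apply oneSub_measurable hs, _root_.betaMeasure,
    withDensity_apply _ (hs.preimage oneSub_measurable),
    withDensity_apply _ hs]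
  conv_rhs => rw [← map_oneSub_restrict]
  rw [setLIntegral_map hs hfm oneSub_measurable]
  exact setLIntegral_congr_fun (hs.preimage oneSub_measurable)
    (fun x _ => (hsym x).symm)

lemma betaMeasure_ae_Icc (α : ℝ) : ∀ᵐ x ∂_root_.betaMeasure α, x ∈ Set.Icc (0:ℝ) 1 := by
  rw [ae_iff]
  have : {x : ℝ | ¬ x ∈ Set.Icc (0:ℝ) 1} = (Set.Icc (0:ℝ) 1)ᶜ := rfl
  rw [this]
  exact betaMeasure_compl_Icc α

lemma betaMeasure_mean (α : ℝ) [IsProbabilityMeasure (_root_.betaMeasure α)] :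
    ∫ x, x ∂_root_.betaMeasure α = 1 / 2 := by
  have hint : Integrable (fun x : ℝ => x) (_root_.betaMeasure α) := by
    refine Integrable.mono' (integrable_const 1) aestronglyMeasurable_id ?_
    filter_upwards [betaMeasure_ae_Icc α] with x hx
    rw [Real.norm_eq_abs]
    exact abs_le.2 ⟨by linarith [hx.1], hx.2⟩
  have h1 : ∫ x, x ∂_root_.betaMeasure α = ∫ x, (1 - x) ∂_root_.betaMeasure α := by
    conv_lhs => rw [← map_oneSub_betaMeasure α]
    exact integral_map oneSub_measurable.aemeasurable aestronglyMeasurable_id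
  have h2 : ∫ x, (1 - x) ∂_root_.betaMeasure α = 1 - ∫ x, x ∂_root_.betaMeasure α := by
    rw [integral_sub (integrable_const 1) hint]
    simp
  rw [h2] at h1
  linarith

end Beta

section Energy

variable {d : ℕ}

local notation "E" => EuclideanSpace ℝ (Fin d)

lemma integral_norm_sub_sq_prod (P Q : Measure E)
    [IsProbabilityMeasure P] [IsProbabilityMeasure Q]
    (hP : MemLp (id : E → E) 2 P) (hQ : MemLp (id : E → E) 2 Q) :
    ∫ p, ‖p.1 - p.2‖ ^ 2 ∂(P.prod Q)
      = (∫ x, ‖x‖ ^ 2 ∂P) + (∫ y, ‖y‖ ^ 2 ∂Q)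
        - 2 * (inner ℝ (∫ x, x ∂P) (∫ y, y ∂Q) : ℝ) := by
  have hP1 : Integrable (fun x : E => x) P := hP.integrable one_le_two
  have hQ1 : Integrable (fun x : E => x) Q := hQ.integrable one_le_two
  have hPn : Integrable (fun x : E => ‖x‖ ^ 2) P := by
    have := hP.integrable_norm_rpow two_ne_zero ENNReal.ofNat_ne_top
    simpa [ENNReal.toReal_ofNat, Real.rpow_natCast, id] using this
  have hQn : Integrable (fun x : E => ‖x‖ ^ 2) Q := by
    have := hQ.integrable_norm_rpow two_ne_zero ENNReal.ofNat_ne_top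
    simpa [ENNReal.toReal_ofNat, Real.rpow_natCast, id] using this
  have hinner : Integrable (fun p : E × E => (inner ℝ p.1 p.2 : ℝ)) (P.prod Q) := by
    refine Integrable.mono' (hP1.norm.mul_prod hQ1.norm) ?_ ?_
    · exact continuous_inner.aestronglyMeasurable
    · refine Filter.Eventually.of_forall fun p => ?_
      rw [Real.norm_eq_abs]
      exact abs_real_inner_le_norm p.1 p.2
  have hf1 : Integrable (fun p : E × E => ‖p.1‖ ^ 2) (P.prod Q) := by
    simpa using hPn.mul_prod (integrable_const (1:ℝ))
  have hf2 : Integrable (fun p : E × E => ‖p.2‖ ^ 2) (P.prod Q) := by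
    simpa using (integrable_const (1:ℝ)).mul_prod hQn
  have h₁ : ∫ p : E × E, ‖p.1‖ ^ 2 ∂(P.prod Q) = ∫ x, ‖x‖ ^ 2 ∂P := by
    have := integral_prod_mul (μ := P) (ν := Q) (f := fun x : E => ‖x‖ ^ 2)
      (g := fun _ : E => (1:ℝ))
    simpa using this
  have h₂ : ∫ p : E × E, ‖p.2‖ ^ 2 ∂(P.prod Q) = ∫ y, ‖y‖ ^ 2 ∂Q := by
    have := integral_prod_mul (μ := P) (ν := Q) (f := fun _ : E => (1:ℝ))
      (g := fun y : E => ‖y‖ ^ 2)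
    simpa using this
  have h₃ : ∫ p : E × E, (inner ℝ p.1 p.2 : ℝ) ∂(P.prod Q)
      = (inner ℝ (∫ x, x ∂P) (∫ y, y ∂Q) : ℝ) := by
    rw [integral_prod _ hinner]
    have hin : ∀ x : E, ∫ y, (inner ℝ x y : ℝ) ∂Q = (inner ℝ x (∫ y, y ∂Q) : ℝ) := by
      intro x
      exact integral_inner hQ1 x
    calc ∫ x, ∫ y, (inner ℝ x y : ℝ) ∂Q ∂P
        = ∫ x, (inner ℝ x (∫ y, y ∂Q) : ℝ) ∂P := by
          exact integral_congr_ae (Filter.Eventually.of_forall fun x => hin x)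
      _ = ∫ x, (inner ℝ (∫ y, y ∂Q) x : ℝ) ∂P := by
          simp_rw [real_inner_comm]
      _ = (inner ℝ (∫ y, y ∂Q) (∫ x, x ∂P) : ℝ) := integral_inner hP1 _
      _ = (inner ℝ (∫ x, x ∂P) (∫ y, y ∂Q) : ℝ) := real_inner_comm _ _
  calc ∫ p, ‖p.1 - p.2‖ ^ 2 ∂(P.prod Q)
      = ∫ p : E × E, (‖p.1‖ ^ 2 - 2 * (inner ℝ p.1 p.2 : ℝ) + ‖p.2‖ ^ 2) ∂(P.prod Q) := by
        refine integral_congr_ae (Filter.Eventually.of_forall fun p => ?_)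
        exact norm_sub_sq_real p.1 p.2
    _ = (∫ x, ‖x‖ ^ 2 ∂P) + (∫ y, ‖y‖ ^ 2 ∂Q)
        - 2 * (inner ℝ (∫ x, x ∂P) (∫ y, y ∂Q) : ℝ) := by
        have hconst : Integrable (fun p : E × E => 2 * (inner ℝ p.1 p.2 : ℝ)) (P.prod Q) :=
          hinner.const_mul 2
        have hsub : Integrable (fun p : E × E => ‖p.1‖ ^ 2 - 2 * (inner ℝ p.1 p.2 : ℝ))
            (P.prod Q) := hf1.sub hconst
        rw [integral_add hsub hf2, integral_sub hf1 hconst, integral_const_mul, h₁, h₂, h₃]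
        ring

lemma energyDistSq_eq_norm_sub_sq (P Q : Measure E)
    [IsProbabilityMeasure P] [IsProbabilityMeasure Q]
    (hP : MemLp (id : E → E) 2 P) (hQ : MemLp (id : E → E) 2 Q) :
    energyDistSq P Q = 2 * ‖(∫ x, x ∂P) - (∫ y, y ∂Q)‖ ^ 2 := by
  rw [energyDistSq, integral_norm_sub_sq_prod P Q hP hQ,
    integral_norm_sub_sq_prod P P hP hP, integral_norm_sub_sq_prod Q Q hQ hQ]
  have e1 : (inner ℝ (∫ x, x ∂P) (∫ x, x ∂P) : ℝ) = ‖(∫ x, x ∂P)‖ ^ 2 :=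
    real_inner_self_eq_norm_sq _
  have e2 : (inner ℝ (∫ y, y ∂Q) (∫ y, y ∂Q) : ℝ) = ‖(∫ y, y ∂Q)‖ ^ 2 :=
    real_inner_self_eq_norm_sq _
  have e3 : ‖(∫ x, x ∂P) - (∫ y, y ∂Q)‖ ^ 2
      = ‖(∫ x, x ∂P)‖ ^ 2 - 2 * (inner ℝ (∫ x, x ∂P) (∫ y, y ∂Q) : ℝ) + ‖(∫ y, y ∂Q)‖ ^ 2 :=
    norm_sub_sq_real _ _
  rw [e1, e2, e3]
  ring

end Energy

theorem energyDistSq_interpolated_eq_quarter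
    {d : ℕ} (α : ℝ) (hα : 0 < α)
    (Pl Pu : Measure (EuclideanSpace ℝ (Fin d)))
    [IsProbabilityMeasure Pl] [IsProbabilityMeasure Pu]
    (hPl2 : MemLp (id : EuclideanSpace ℝ (Fin d) → EuclideanSpace ℝ (Fin d)) 2 Pl)
    (hPu2 : MemLp (id : EuclideanSpace ℝ (Fin d) → EuclideanSpace ℝ (Fin d)) 2 Pu)
    {Ω : Type*} [MeasurableSpace Ω] (μ : Measure Ω) [IsProbabilityMeasure μ]
    (Xl Xu : Ω → EuclideanSpace ℝ (Fin d)) (L : Ω → ℝ)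
    (hXlmeas : Measurable Xl) (hXumeas : Measurable Xu) (hLmeas : Measurable L)
    (hXlLaw : μ.map Xl = Pl) (hXuLaw : μ.map Xu = Pu) (hLLaw : μ.map L = _root_.betaMeasure α)
    (hindep₁ : IndepFun Xl Xu μ)
    (hindep₂ : IndepFun L (fun ω => (Xl ω, Xu ω)) μ) :
    energyDistSq (μ.map (fun ω => L ω • Xl ω + (1 - L ω) • Xu ω)) Pu
      = (1 / 4) * energyDistSq Pl Pu := by
  set f : Ω → EuclideanSpace ℝ (Fin d) := fun ω => L ω • Xl ω + (1 - L ω) • Xu ω with hfdef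
  have hfmeas : Measurable f := by
    rw [hfdef]
    exact (hLmeas.smul hXlmeas).add ((hLmeas.const_sub 1).smul hXumeas)
  haveI hbetaProb : IsProbabilityMeasure (_root_.betaMeasure α) := by
    rw [← hLLaw]; exact Measure.isProbabilityMeasure_map hLmeas.aemeasurable
  haveI : IsProbabilityMeasure (μ.map f) := Measure.isProbabilityMeasure_map hfmeas.aemeasurable
  -- L is a.e. in [0,1]
  have hL01 : ∀ᵐ ω ∂μ, L ω ∈ Set.Icc (0:ℝ) 1 := by
    have h0 : μ.map L (Set.Icc (0:ℝ) 1)ᶜ = 0 := by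
      rw [hLLaw]; exact betaMeasure_compl_Icc α
    rw [Measure.map_apply hLmeas measurableSet_Icc.compl] at h0
    rw [ae_iff]
    exact h0
  -- MemLp facts
  have hXl2 : MemLp Xl 2 μ := by
    have := (memLp_map_measure_iff aestronglyMeasurable_id hXlmeas.aemeasurable).mp
      (by rw [hXlLaw]; exact hPl2)
    simpa [Function.comp] using this
  have hXu2 : MemLp Xu 2 μ := by
    have := (memLp_map_measure_iff aestronglyMeasurable_id hXumeas.aemeasurable).mp
      (by rw [hXuLaw]; exact hPu2)
    simpa [Function.comp] using this
  have hXl1 : Integrable Xl μ := hXl2.integrable one_le_two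
  have hXu1 : Integrable Xu μ := hXu2.integrable one_le_two
  have hL1 : Integrable L μ := by
    refine Integrable.mono' (integrable_const 1) hLmeas.aestronglyMeasurable ?_
    filter_upwards [hL01] with ω hω
    rw [Real.norm_eq_abs]
    exact abs_le.2 ⟨by linarith [hω.1], hω.2⟩
  have hf2 : MemLp f 2 μ := by
    have hsum : MemLp (fun ω => ‖Xl ω‖ + ‖Xu ω‖) 2 μ := hXl2.norm.add hXu2.norm
    refine MemLp.of_le hsum hfmeas.aestronglyMeasurable ?_
    filter_upwards [hL01] with ω hω
    have h1 : ‖f ω‖ ≤ ‖L ω • Xl ω‖ + ‖(1 - L ω) • Xu ω‖ := norm_add_le _ _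
    rw [norm_smul, norm_smul, Real.norm_eq_abs, Real.norm_eq_abs] at h1
    have hL : |L ω| ≤ 1 := abs_le.2 ⟨by linarith [hω.1], hω.2⟩
    have hL' : |1 - L ω| ≤ 1 := abs_le.2 ⟨by linarith [hω.2], by linarith [hω.1]⟩
    have hbound : ‖f ω‖ ≤ ‖Xl ω‖ + ‖Xu ω‖ := by
      nlinarith [norm_nonneg (Xl ω), norm_nonneg (Xu ω), abs_nonneg (L ω), abs_nonneg (1 - L ω)]
    calc ‖f ω‖ ≤ ‖Xl ω‖ + ‖Xu ω‖ := hbound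
      _ ≤ ‖‖Xl ω‖ + ‖Xu ω‖‖ := le_abs_self _
  have hf1 : Integrable f μ := hf2.integrable one_le_two
  have hPt2 : MemLp (id : EuclideanSpace ℝ (Fin d) → EuclideanSpace ℝ (Fin d)) 2 (μ.map f) :=
    (memLp_map_measure_iff aestronglyMeasurable_id hfmeas.aemeasurable).mpr
      (by simpa [Function.comp] using hf2)
  -- mean of L
  have hmL : ∫ ω, L ω ∂μ = 1 / 2 := by
    have h : ∫ x, x ∂(μ.map L) = ∫ ω, L ω ∂μ :=
      integral_map hLmeas.aemeasurable aestronglyMeasurable_id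
    rw [hLLaw] at h
    rw [← h]
    exact betaMeasure_mean α
  -- integrabilities of the two summands
  have hint1 : Integrable (fun ω => L ω • Xl ω) μ := by
    refine Integrable.mono' hXl1.norm (hLmeas.aestronglyMeasurable.smul
      hXlmeas.aestronglyMeasurable) ?_
    filter_upwards [hL01] with ω hω
    rw [norm_smul, Real.norm_eq_abs]
    have : |L ω| ≤ 1 := abs_le.2 ⟨by linarith [hω.1], hω.2⟩
    nlinarith [norm_nonneg (Xl ω)]
  have hint2 : Integrable (fun ω => (1 - L ω) • Xu ω) μ := by
    refine Integrable.mono' hXu1.norm ((measurable_const.sub hLmeas).aestronglyMeasurable.smul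
      hXumeas.aestronglyMeasurable) ?_
    filter_upwards [hL01] with ω hω
    rw [norm_smul, Real.norm_eq_abs]
    have : |1 - L ω| ≤ 1 := abs_le.2 ⟨by linarith [hω.2], by linarith [hω.1]⟩
    nlinarith [norm_nonneg (Xu ω)]
  -- independence: E[L • Xl] = (∫ L) • ∫ Xl
  have hsmul : ∀ (c : Ω → ℝ) (X : Ω → EuclideanSpace ℝ (Fin d)), Measurable c → Measurable X →
      IndepFun c X μ → Integrable c μ → Integrable X μ → Integrable (fun ω => c ω • X ω) μ →
      ∫ ω, c ω • X ω ∂μ = (∫ ω, c ω ∂μ) • ∫ ω, X ω ∂μ := by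
    intro c X hc hX hind hci hXi hcXi
    refine PiLp.ext fun i => ?_
    have hXiInt : Integrable (fun ω => X ω i) μ :=
      (EuclideanSpace.proj (𝕜 := ℝ) i).integrable_comp hXi
    have hindi : IndepFun c (fun ω => X ω i) μ :=
      hind.comp measurable_id ((EuclideanSpace.proj (𝕜 := ℝ) i).continuous.measurable)
    have hmul : (∫ ω, c ω * X ω i ∂μ) = (∫ ω, c ω ∂μ) * ∫ ω, X ω i ∂μ :=
      hindi.integral_fun_mul_eq_mul_integral hc.aestronglyMeasurable
        (((EuclideanSpace.proj (𝕜 := ℝ) i).continuous.measurable.comp hX).aestronglyMeasurable)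
    have hproj : (∫ ω, c ω • X ω ∂μ) i = ∫ ω, c ω * X ω i ∂μ := by
      have := ((EuclideanSpace.proj (𝕜 := ℝ) i).integral_comp_comm hcXi).symm
      simpa using this
    have hprojX : (∫ ω, X ω ∂μ) i = ∫ ω, X ω i ∂μ := by
      have := ((EuclideanSpace.proj (𝕜 := ℝ) i).integral_comp_comm hXi).symm
      simpa using this
    rw [hproj, hmul, PiLp.smul_apply, hprojX, smul_eq_mul]
  -- independence facts
  have hindL : IndepFun L Xl μ := by
    have := hindep₂.comp measurable_id (measurable_fst :
      Measurable fun p : EuclideanSpace ℝ (Fin d) × EuclideanSpace ℝ (Fin d) => p.1)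
    exact this
  have hindU : IndepFun (fun ω => 1 - L ω) Xu μ := by
    have := hindep₂.comp (measurable_id.const_sub (1:ℝ)) (measurable_snd :
      Measurable fun p : EuclideanSpace ℝ (Fin d) × EuclideanSpace ℝ (Fin d) => p.2)
    exact this
  have h1L : Integrable (fun ω => 1 - L ω) μ := (integrable_const (1:ℝ)).sub hL1
  have hm1L : ∫ ω, (1 - L ω) ∂μ = 1 / 2 := by
    rw [integral_sub (integrable_const 1) hL1, hmL]
    norm_num
  have hmXl : ∫ ω, L ω • Xl ω ∂μ = (1/2 : ℝ) • ∫ ω, Xl ω ∂μ := by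
    rw [hsmul L Xl hLmeas hXlmeas hindL hL1 hXl1 hint1, hmL]
  have hmXu : ∫ ω, (1 - L ω) • Xu ω ∂μ = (1/2 : ℝ) • ∫ ω, Xu ω ∂μ := by
    rw [hsmul (fun ω => 1 - L ω) Xu (measurable_const.sub hLmeas) hXumeas hindU h1L hXu1 hint2,
      hm1L]
  have hmf : ∫ x, x ∂(μ.map f)
      = (1/2 : ℝ) • (∫ ω, Xl ω ∂μ) + (1/2 : ℝ) • (∫ ω, Xu ω ∂μ) := by
    have h0 : ∫ x, x ∂(μ.map f) = ∫ ω, f ω ∂μ :=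
      integral_map hfmeas.aemeasurable aestronglyMeasurable_id
    have h1 : ∫ ω, f ω ∂μ = (∫ ω, L ω • Xl ω ∂μ) + ∫ ω, (1 - L ω) • Xu ω ∂μ :=
      integral_add hint1 hint2
    rw [h0, h1, hmXl, hmXu]
  have hmeanPl : ∫ x, x ∂Pl = ∫ ω, Xl ω ∂μ := by
    rw [← hXlLaw]
    exact integral_map hXlmeas.aemeasurable aestronglyMeasurable_id
  have hmeanPu : ∫ x, x ∂Pu = ∫ ω, Xu ω ∂μ := by
    rw [← hXuLaw]
    exact integral_map hXumeas.aemeasurable aestronglyMeasurable_id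
  rw [energyDistSq_eq_norm_sub_sq _ _ hPt2 hPu2, energyDistSq_eq_norm_sub_sq _ _ hPl2 hPu2,
    hmf, hmeanPl, hmeanPu]
  set a := ∫ ω, Xl ω ∂μ
  set b := ∫ ω, Xu ω ∂μ
  have hv : (1/2 : ℝ) • a + (1/2 : ℝ) • b - b = (1/2 : ℝ) • (a - b) := by module
  rw [hv, norm_smul, Real.norm_eq_abs, abs_of_nonneg (by norm_num : (0:ℝ) ≤ 1/2)]
  ring
end

section
/- Let P_l and P_u be Borel probability measures on ℝ^d with finite second moments, and let X^l ~ P_l, X^u ~ P_u, and λ ~ β(α, α) (α > 0) be mutually independent. Let P̃ be the law of λ·X^l + (1−λ)·X^u. With the euclidean generalized energy distance J²(P, Q) = 2·E[‖X − Y‖²] − E[‖X − X'‖²] − E[‖Y − Y'‖²] (X, X' ~ P and Y, Y' ~ Q mutually independent, ‖·‖ the euclidean norm), one has J²(P̃, P_u) ≤ J²(P_l, P_u); that is, the energy distance between the empirical distribution of the interpolated pseudo-samples and that of the unlabeled samples is smaller than or equal to that between the labeled and unlabeled samples. -/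
open MeasureTheory ProbabilityTheory

open scoped RealInnerProductSpace

section Aux

variable {d : ℕ}

local notation "E" => EuclideanSpace ℝ (Fin d)

lemma aux_int_norm_sq {P : Measure E} (h : MemLp (id : E → E) 2 P) :
    Integrable (fun x : E => ‖x‖ ^ 2) P := by
  have := h.norm.integrable_sq
  simpa [sq] using this

lemma aux_key_prod (P Q : Measure E) [IsProbabilityMeasure P] [IsProbabilityMeasure Q]
    (hP : MemLp (id : E → E) 2 P) (hQ : MemLp (id : E → E) 2 Q) :
    ∫ p, ‖p.1 - p.2‖ ^ 2 ∂(P.prod Q)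
      = (∫ x, ‖x‖ ^ 2 ∂P) + (∫ y, ‖y‖ ^ 2 ∂Q)
        - 2 * ⟪∫ x, x ∂P, ∫ y, y ∂Q⟫ := by
  have hP1 : Integrable (fun x : E => x) P := hP.integrable one_le_two
  have hQ1 : Integrable (fun y : E => y) Q := hQ.integrable one_le_two
  have hPsq : Integrable (fun x : E => ‖x‖ ^ 2) P := aux_int_norm_sq hP
  have hQsq : Integrable (fun x : E => ‖x‖ ^ 2) Q := aux_int_norm_sq hQ
  have hfst : Integrable (fun p : E × E => ‖p.1‖ ^ 2) (P.prod Q) := by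
    have h1 : Integrable (fun x : E => ‖x‖ ^ 2) ((P.prod Q).map Prod.fst) := by
      rw [Measure.map_fst_prod]; simpa [measure_univ] using hPsq
    exact (integrable_map_measure h1.aestronglyMeasurable measurable_fst.aemeasurable).mp h1
  have hsnd : Integrable (fun p : E × E => ‖p.2‖ ^ 2) (P.prod Q) := by
    have h1 : Integrable (fun x : E => ‖x‖ ^ 2) ((P.prod Q).map Prod.snd) := by
      rw [Measure.map_snd_prod]; simpa [measure_univ] using hQsq
    exact (integrable_map_measure h1.aestronglyMeasurable measurable_snd.aemeasurable).mp h1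
  have hnm : Integrable (fun p : E × E => ‖p.1‖ * ‖p.2‖) (P.prod Q) :=
    Integrable.mul_prod hP1.norm hQ1.norm
  have hinner : Integrable (fun p : E × E => ⟪p.1, p.2⟫) (P.prod Q) := by
    refine hnm.mono' (Continuous.aestronglyMeasurable ?_) ?_
    · exact continuous_inner
    · filter_upwards with p
      simpa using abs_real_inner_le_norm p.1 p.2
  have heq : (fun p : E × E => ‖p.1 - p.2‖ ^ 2)
      = fun p : E × E => ‖p.1‖ ^ 2 + ‖p.2‖ ^ 2 - 2 * ⟪p.1, p.2⟫ := by
    funext p; rw [norm_sub_sq_real]; ring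
  rw [heq, integral_sub (f := fun p : E × E => ‖p.1‖ ^ 2 + ‖p.2‖ ^ 2)
    (g := fun p : E × E => 2 * ⟪p.1, p.2⟫) (hfst.add hsnd) (hinner.const_mul 2),
    integral_add hfst hsnd, MeasureTheory.integral_const_mul]
  have hmf : ∫ p : E × E, ‖p.1‖ ^ 2 ∂(P.prod Q) = ∫ x, ‖x‖ ^ 2 ∂P := by
    rw [← integral_map (φ := (Prod.fst : E × E → E)) measurable_fst.aemeasurable
      (f := fun x : E => ‖x‖ ^ 2) ((continuous_norm.pow 2).aestronglyMeasurable),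
      Measure.map_fst_prod]
    simp [measure_univ]
  have hms : ∫ p : E × E, ‖p.2‖ ^ 2 ∂(P.prod Q) = ∫ y, ‖y‖ ^ 2 ∂Q := by
    rw [← integral_map (φ := (Prod.snd : E × E → E)) measurable_snd.aemeasurable
      (f := fun x : E => ‖x‖ ^ 2) ((continuous_norm.pow 2).aestronglyMeasurable),
      Measure.map_snd_prod]
    simp [measure_univ]
  have hmi : ∫ p : E × E, ⟪p.1, p.2⟫ ∂(P.prod Q) = ⟪∫ x, x ∂P, ∫ y, y ∂Q⟫ := by
    rw [integral_prod _ hinner]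
    have h1 : ∀ x : E, ∫ y, ⟪x, y⟫ ∂Q = ⟪x, ∫ y, y ∂Q⟫ := fun x => integral_inner hQ1 x
    simp_rw [h1]
    have h2 : ∀ x : E, ⟪x, ∫ y, y ∂Q⟫ = ⟪∫ y, y ∂Q, x⟫ := fun x => real_inner_comm _ _
    simp_rw [h2]
    rw [integral_inner hP1, real_inner_comm]
  rw [hmf, hms, hmi]

lemma aux_energyDistSq_eq (P Q : Measure E) [IsProbabilityMeasure P] [IsProbabilityMeasure Q]
    (hP : MemLp (id : E → E) 2 P) (hQ : MemLp (id : E → E) 2 Q) :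
    energyDistSq P Q = 2 * ‖(∫ x, x ∂P) - ∫ y, y ∂Q‖ ^ 2 := by
  unfold energyDistSq
  rw [aux_key_prod P Q hP hQ, aux_key_prod P P hP hP, aux_key_prod Q Q hQ hQ,
    norm_sub_sq_real, real_inner_self_eq_norm_sq, real_inner_self_eq_norm_sq]
  ring

end Aux


lemma aux_integral_smul_indep {d : ℕ} {Ω : Type*} [MeasurableSpace Ω] {μ : Measure Ω}
    [IsProbabilityMeasure μ] {L : Ω → ℝ} {X : Ω → EuclideanSpace ℝ (Fin d)}
    (hindep : IndepFun L X μ) (hLi : Integrable L μ) (hXi : Integrable X μ)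
    (hLXi : Integrable (fun ω => L ω • X ω) μ) :
    ∫ ω, L ω • X ω ∂μ = (∫ ω, L ω ∂μ) • ∫ ω, X ω ∂μ := by
  ext i
  have hproj : (∫ ω, L ω • X ω ∂μ) i = ∫ ω, L ω * X ω i ∂μ := by
    have h := ((EuclideanSpace.proj i :
      EuclideanSpace ℝ (Fin d) →L[ℝ] ℝ).integral_comp_comm hLXi).symm
    simpa [smul_eq_mul] using h
  have hXii : Integrable (fun ω => X ω i) μ := by
    have h := (EuclideanSpace.proj i :
      EuclideanSpace ℝ (Fin d) →L[ℝ] ℝ).integrable_comp hXi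
    simpa using h
  have hXmean : (∫ ω, X ω ∂μ) i = ∫ ω, X ω i ∂μ := by
    have h := ((EuclideanSpace.proj i :
      EuclideanSpace ℝ (Fin d) →L[ℝ] ℝ).integral_comp_comm hXi).symm
    simpa using h
  have hindep' : IndepFun L (fun ω => X ω i) μ := by
    have h := hindep.comp measurable_id
      ((EuclideanSpace.proj i :
        EuclideanSpace ℝ (Fin d) →L[ℝ] ℝ).continuous.measurable)
    exact h
  have hmul : ∫ ω, L ω * X ω i ∂μ = (∫ ω, L ω ∂μ) * ∫ ω, X ω i ∂μ :=
    hindep'.integral_mul_eq_mul_integral hLi.aestronglyMeasurable hXii.aestronglyMeasurable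
  simp only [PiLp.smul_apply, smul_eq_mul]
  rw [hproj, hmul, hXmean]

/-- Let `P_l, P_u` be Borel probability measures on `ℝ^d` with finite second
moments, let `X^l ~ P_l`, `X^u ~ P_u` and `λ ~ β(α, α)` be mutually independent, and let
`P̃` be the law of `λ • X^l + (1 − λ) • X^u`. Then `J²(P̃, P_u) ≤ J²(P_l, P_u)`. -/
theorem energyDistSq_interpolated_le
    {d : ℕ} (α : ℝ) (hα : 0 < α)
    (Pl Pu : Measure (EuclideanSpace ℝ (Fin d)))
    [IsProbabilityMeasure Pl] [IsProbabilityMeasure Pu]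
    (hPl2 : MemLp (id : EuclideanSpace ℝ (Fin d) → EuclideanSpace ℝ (Fin d)) 2 Pl)
    (hPu2 : MemLp (id : EuclideanSpace ℝ (Fin d) → EuclideanSpace ℝ (Fin d)) 2 Pu)
    {Ω : Type*} [MeasurableSpace Ω] (μ : Measure Ω) [IsProbabilityMeasure μ]
    (Xl Xu : Ω → EuclideanSpace ℝ (Fin d)) (L : Ω → ℝ)
    (hXlmeas : Measurable Xl) (hXumeas : Measurable Xu) (hLmeas : Measurable L)
    (hXlLaw : μ.map Xl = Pl) (hXuLaw : μ.map Xu = Pu) (hLLaw : μ.map L = _root_.betaMeasure α)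
    (hindep₁ : IndepFun Xl Xu μ)
    (hindep₂ : IndepFun L (fun ω => (Xl ω, Xu ω)) μ) :
    energyDistSq (μ.map (fun ω => L ω • Xl ω + (1 - L ω) • Xu ω)) Pu
      ≤ energyDistSq Pl Pu := by
  classical
  set f : Ω → EuclideanSpace ℝ (Fin d) := fun ω => L ω • Xl ω + (1 - L ω) • Xu ω with hfdef
  have hfmeas : Measurable f := (hLmeas.smul hXlmeas).add ((hLmeas.const_sub 1).smul hXumeas)
  haveI : IsProbabilityMeasure (μ.map f) := Measure.isProbabilityMeasure_map hfmeas.aemeasurable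
  have hXl2 : MemLp Xl 2 μ := by
    have h := (memLp_map_measure_iff aestronglyMeasurable_id hXlmeas.aemeasurable).mp
      (hXlLaw ▸ hPl2)
    simpa using h
  have hXu2 : MemLp Xu 2 μ := by
    have h := (memLp_map_measure_iff aestronglyMeasurable_id hXumeas.aemeasurable).mp
      (hXuLaw ▸ hPu2)
    simpa using h
  -- L ∈ [0,1] a.e.
  have hmeasI : MeasurableSet ((Set.Icc (0:ℝ) 1)ᶜ) := measurableSet_Icc.compl
  have hbeta0 : betaMeasure α ((Set.Icc (0:ℝ) 1)ᶜ) = 0 := by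
    rw [_root_.betaMeasure, withDensity_apply _ hmeasI, Measure.restrict_restrict hmeasI]
    have h0 : volume.restrict ((Set.Icc (0:ℝ) 1)ᶜ ∩ Set.Icc (0:ℝ) 1) = 0 :=
      Measure.restrict_eq_zero.mpr (by simp)
    rw [h0, lintegral_zero_measure]
  have hL01 : ∀ᵐ ω ∂μ, L ω ∈ Set.Icc (0:ℝ) 1 := by
    have h : μ (L ⁻¹' ((Set.Icc (0:ℝ) 1)ᶜ)) = 0 := by
      rw [← Measure.map_apply hLmeas hmeasI, hLLaw]; exact hbeta0
    exact ae_iff.mpr h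
  have hLint : Integrable L μ := by
    refine Integrable.mono' (integrable_const (1 : ℝ)) hLmeas.aestronglyMeasurable ?_
    filter_upwards [hL01] with ω h
    rw [Real.norm_eq_abs, abs_le]; exact ⟨by linarith [h.1], h.2⟩
  have hXl1 : Integrable Xl μ := hXl2.integrable one_le_two
  have hXu1 : Integrable Xu μ := hXu2.integrable one_le_two
  have hLXl : Integrable (fun ω => L ω • Xl ω) μ := by
    refine Integrable.mono' hXl1.norm (hLmeas.smul hXlmeas).aestronglyMeasurable ?_
    filter_upwards [hL01] with ω h
    rw [norm_smul, Real.norm_eq_abs, abs_of_nonneg h.1]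
    exact mul_le_of_le_one_left (norm_nonneg _) h.2
  have hLXu : Integrable (fun ω => (1 - L ω) • Xu ω) μ := by
    refine Integrable.mono' hXu1.norm ((hLmeas.const_sub 1).smul hXumeas).aestronglyMeasurable ?_
    filter_upwards [hL01] with ω h
    rw [norm_smul, Real.norm_eq_abs, abs_of_nonneg (by linarith [h.2])]
    exact mul_le_of_le_one_left (norm_nonneg _) (by linarith [h.1])
  have hf2 : MemLp f 2 μ := by
    refine (hXl2.norm.add hXu2.norm).mono hfmeas.aestronglyMeasurable ?_
    filter_upwards [hL01] with ω h
    have h1 : ‖f ω‖ ≤ ‖L ω • Xl ω‖ + ‖(1 - L ω) • Xu ω‖ := norm_add_le _ _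
    have h2 : ‖L ω • Xl ω‖ ≤ ‖Xl ω‖ := by
      rw [norm_smul, Real.norm_eq_abs, abs_of_nonneg h.1]
      exact mul_le_of_le_one_left (norm_nonneg _) h.2
    have h3 : ‖(1 - L ω) • Xu ω‖ ≤ ‖Xu ω‖ := by
      rw [norm_smul, Real.norm_eq_abs, abs_of_nonneg (by linarith [h.2])]
      exact mul_le_of_le_one_left (norm_nonneg _) (by linarith [h.1])
    have h4 : (0:ℝ) ≤ ‖Xl ω‖ + ‖Xu ω‖ := by positivity
    simp only [Pi.add_apply, Real.norm_eq_abs]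
    rw [abs_of_nonneg h4]
    linarith
  have hPt2 : MemLp (id : EuclideanSpace ℝ (Fin d) → EuclideanSpace ℝ (Fin d)) 2 (μ.map f) :=
    (memLp_map_measure_iff aestronglyMeasurable_id hfmeas.aemeasurable).mpr hf2
  -- independence projections
  have hindepLXl : IndepFun L Xl μ :=
    hindep₂.comp measurable_id measurable_fst
  have hindepLXu : IndepFun (fun ω => 1 - L ω) Xu μ :=
    hindep₂.comp (measurable_const.sub measurable_id) measurable_snd
  have hL1int : Integrable (fun ω => 1 - L ω) μ := (integrable_const (1:ℝ)).sub hLint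
  -- means
  set t : ℝ := ∫ ω, L ω ∂μ with htdef
  have ht0 : 0 ≤ t := integral_nonneg_of_ae (hL01.mono fun ω h => h.1)
  have ht1 : t ≤ 1 := by
    have h := integral_mono_ae hLint (integrable_const (1:ℝ)) (hL01.mono fun ω h => h.2)
    simpa using h
  set ml : EuclideanSpace ℝ (Fin d) := ∫ x, x ∂Pl with hmldef
  set mu : EuclideanSpace ℝ (Fin d) := ∫ x, x ∂Pu with hmudef
  have hml : ∫ ω, Xl ω ∂μ = ml := by
    rw [hmldef, ← hXlLaw]
    exact (integral_map (f := fun x : EuclideanSpace ℝ (Fin d) => x) hXlmeas.aemeasurable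
      aestronglyMeasurable_id).symm
  have hmu : ∫ ω, Xu ω ∂μ = mu := by
    rw [hmudef, ← hXuLaw]
    exact (integral_map (f := fun x : EuclideanSpace ℝ (Fin d) => x) hXumeas.aemeasurable
      aestronglyMeasurable_id).symm
  have h1mL : ∫ ω, (1 - L ω) ∂μ = 1 - t := by
    rw [integral_sub (integrable_const (1:ℝ)) hLint]; simp [htdef]
  have hmean : ∫ x, x ∂(μ.map f) = t • ml + (1 - t) • mu := by
    rw [integral_map (f := fun x : EuclideanSpace ℝ (Fin d) => x) hfmeas.aemeasurable
      aestronglyMeasurable_id]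
    calc ∫ ω, f ω ∂μ = (∫ ω, L ω • Xl ω ∂μ) + ∫ ω, (1 - L ω) • Xu ω ∂μ :=
          integral_add hLXl hLXu
      _ = t • ml + (1 - t) • mu := by
          rw [aux_integral_smul_indep hindepLXl hLint hXl1 hLXl,
            aux_integral_smul_indep hindepLXu hL1int hXu1 hLXu, hml, hmu, h1mL]
  rw [aux_energyDistSq_eq _ _ hPt2 hPu2, aux_energyDistSq_eq _ _ hPl2 hPu2, hmean]
  have hdiff : t • ml + (1 - t) • mu - mu = t • (ml - mu) := by
    rw [smul_sub]; module
  rw [hdiff, norm_smul, Real.norm_eq_abs, abs_of_nonneg ht0, mul_pow]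
  have : t ^ 2 ≤ 1 := by nlinarith
  nlinarith [sq_nonneg ‖ml - mu‖, norm_nonneg (ml - mu)]
end
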